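/- Let T(h) = (√2/(2(1−2k²)))·(2E(k) − K(k) + Π(2k², k)) with k = √(2+h)/2, defined for h ∈ (−2, 0). Then T is continuous and T(h) → π/√2 as h → −2⁺. -/

import Mathlib

set_option maxHeartbeats 1000000


open Real Set Filter MeasureTheory Topology

/-- Complete elliptic integral of the first kind. -/
noncomputable def ellipticK (k : ℝ) : ℝ :=
  ∫ t in (0 : ℝ)..1, 1 / (Real.sqrt (1 - t^2) * Real.sqrt (1 - k^2 * t^2))

/-- Complete elliptic integral of the second kind. -/
noncomputable def ellipticE (k : ℝ) : ℝ :=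
  ∫ t in (0 : ℝ)..1, Real.sqrt (1 - k^2 * t^2) / Real.sqrt (1 - t^2)

/-- Complete elliptic integral of the third kind. -/
noncomputable def ellipticPi (n k : ℝ) : ℝ :=
  ∫ t in (0 : ℝ)..1,
    1 / ((1 - n * t^2) * Real.sqrt (1 - t^2) * Real.sqrt (1 - k^2 * t^2))

/-- The period function of the circular Sitnikov problem. -/
noncomputable def sitnikovT (h : ℝ) : ℝ :=
  let k := Real.sqrt (2 + h) / 2
  (Real.sqrt 2 / (2 * (1 - 2 * k^2))) *
    (2 * ellipticE k - ellipticK k + ellipticPi (2 * k^2) k)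

lemma intInt_bound : IntervalIntegrable (fun t : ℝ => ((1:ℝ) - t) ^ (-(1/2) : ℝ)) volume 0 1 := by
  have h := (intervalIntegral.intervalIntegrable_rpow' (r := -(1/2)) (by norm_num) (a := 0) (b := 1)).comp_sub_left 1
  simpa using h.symm

lemma rpow_half {t : ℝ} (ht : t ≤ 1) : ((1:ℝ) - t) ^ (-(1/2) : ℝ) = 1 / Real.sqrt (1 - t) := by
  rw [Real.rpow_neg (by linarith), Real.sqrt_eq_rpow, one_div ((1 - t) ^ (1/(2:ℝ)))]

lemma sqrt_mono_aux {t : ℝ} (ht : t ∈ Ioc (0:ℝ) 1) : Real.sqrt (1 - t) ≤ Real.sqrt (1 - t^2) :=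
  Real.sqrt_le_sqrt (by nlinarith [ht.1, ht.2])

lemma contK {k₀ : ℝ} (hk : |k₀| < 1) : ContinuousAt ellipticK k₀ := by
  set c : ℝ := (|k₀| + 1) / 2 with hcdef
  have habs := abs_nonneg k₀
  have hck : |k₀| < c := by simp only [hcdef]; linarith
  have hc0 : 0 ≤ c := by positivity
  have hc1 : c < 1 := by simp only [hcdef]; linarith
  have hcc : (0:ℝ) < 1 - c^2 := by nlinarith
  unfold ellipticK
  apply intervalIntegral.continuousAt_of_dominated_interval
    (bound := fun t => (1 / Real.sqrt (1 - c^2)) * ((1:ℝ) - t) ^ (-(1/2) : ℝ))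
  · filter_upwards with k
    apply Measurable.aestronglyMeasurable
    exact measurable_const.div ((Real.continuous_sqrt.measurable.comp (measurable_const.sub (measurable_id.pow_const 2))).mul (Real.continuous_sqrt.measurable.comp (measurable_const.sub (measurable_const.mul (measurable_id.pow_const 2)))))
  · have hmem : {k : ℝ | |k| < c} ∈ 𝓝 k₀ :=
      (isOpen_lt continuous_abs continuous_const).mem_nhds hck
    filter_upwards [hmem] with k hkc
    filter_upwards with t ht
    rw [uIoc_of_le (by norm_num : (0:ℝ) ≤ 1)] at ht
    have hk2 : k^2 ≤ c^2 := by nlinarith [sq_abs k, abs_nonneg k, le_of_lt hkc]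
    have ht2 : t^2 ≤ 1 := by nlinarith [ht.1, ht.2]
    have hkt : k^2 * t^2 ≤ c^2 := by
      nlinarith [mul_nonneg (sub_nonneg.mpr hk2) (sq_nonneg t), mul_nonneg (sq_nonneg k) (sub_nonneg.mpr ht2)]
    rcases eq_or_lt_of_le ht.2 with h1 | h1
    · subst h1
      norm_num [Real.zero_rpow]
    · have h1t : (0:ℝ) < 1 - t := by linarith
      rw [rpow_half ht.2, Real.norm_eq_abs, abs_of_nonneg (by positivity), div_mul_div_comm, one_mul]
      have key : Real.sqrt (1-c^2) * Real.sqrt (1-t) ≤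
          Real.sqrt (1-t^2) * Real.sqrt (1-k^2*t^2) := by
        rw [mul_comm]
        exact mul_le_mul (sqrt_mono_aux ht) (Real.sqrt_le_sqrt (by linarith)) (Real.sqrt_nonneg _) (Real.sqrt_nonneg _)
      exact one_div_le_one_div_of_le (by positivity) key
  · exact intInt_bound.const_mul _
  · have h1 : ∀ᵐ t : ℝ, t ≠ 1 := by
      rw [ae_iff]
      simp only [ne_eq, not_not, setOf_eq_eq_singleton]
      exact measure_singleton 1
    filter_upwards [h1] with t ht1 ht
    rw [uIoc_of_le (by norm_num : (0:ℝ) ≤ 1)] at ht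
    have htlt : t < 1 := lt_of_le_of_ne ht.2 ht1
    have hden : 0 < Real.sqrt (1 - t^2) * Real.sqrt (1 - k₀^2 * t^2) := by
      apply mul_pos (Real.sqrt_pos.mpr (by nlinarith [ht.1])) 
        (Real.sqrt_pos.mpr (by nlinarith [sq_abs k₀, abs_nonneg k₀, ht.1, ht.2, mul_nonneg (sq_nonneg k₀) (by nlinarith [ht.1, ht.2] : (0:ℝ) ≤ 1 - t^2)]))
    exact ContinuousAt.div continuousAt_const
      ((continuous_const.sqrt.mul ((continuous_const.sub ((continuous_pow 2).mul continuous_const)).sqrt)).continuousAt)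
      (ne_of_gt hden)

lemma contE {k₀ : ℝ} : ContinuousAt ellipticE k₀ := by
  unfold ellipticE
  apply intervalIntegral.continuousAt_of_dominated_interval
    (bound := fun t => ((1:ℝ) - t) ^ (-(1/2) : ℝ))
  · filter_upwards with k
    apply Measurable.aestronglyMeasurable
    exact (Real.continuous_sqrt.measurable.comp (measurable_const.sub
      (measurable_const.mul (measurable_id.pow_const 2)))).div
      (Real.continuous_sqrt.measurable.comp (measurable_const.sub (measurable_id.pow_const 2)))
  · filter_upwards with k
    filter_upwards with t ht
    rw [uIoc_of_le (by norm_num : (0:ℝ) ≤ 1)] at ht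
    rcases eq_or_lt_of_le ht.2 with h1 | h1
    · subst h1
      norm_num [Real.zero_rpow]
    · have h1t : (0:ℝ) < 1 - t := by linarith
      rw [rpow_half ht.2, Real.norm_eq_abs, abs_of_nonneg (by positivity)]
      exact div_le_div₀ (by norm_num)
        (Real.sqrt_le_one.mpr (by nlinarith [sq_nonneg k, sq_nonneg t]))
        (Real.sqrt_pos.mpr h1t) (sqrt_mono_aux ht)
  · exact intInt_bound
  · filter_upwards with t ht
    exact (((continuous_const.sub ((continuous_pow 2).mul continuous_const)).sqrt).div_const _).continuousAt

lemma contPi {k₀ : ℝ} (hk : |k₀| < Real.sqrt 2 / 2) :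
    ContinuousAt (fun k => ellipticPi (2*k^2) k) k₀ := by
  have hs2 : Real.sqrt 2 ^ 2 = 2 := Real.sq_sqrt (by norm_num)
  have hs2n : (0:ℝ) < Real.sqrt 2 := Real.sqrt_pos.mpr (by norm_num)
  set c : ℝ := (|k₀| + Real.sqrt 2 / 2) / 2 with hcdef
  have habs := abs_nonneg k₀
  have hck : |k₀| < c := by simp only [hcdef]; linarith
  have hc0 : 0 ≤ c := by positivity
  have hc1 : c < Real.sqrt 2 / 2 := by simp only [hcdef]; linarith
  have hcsq : c^2 < 1/2 := by nlinarith
  have hcc : (0:ℝ) < 1 - c^2 := by linarith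
  have h2cc : (0:ℝ) < 1 - 2*c^2 := by linarith
  unfold ellipticPi
  apply intervalIntegral.continuousAt_of_dominated_interval
    (bound := fun t => (1 / ((1 - 2*c^2) * Real.sqrt (1 - c^2))) * ((1:ℝ) - t) ^ (-(1/2) : ℝ))
  · filter_upwards with k
    apply Measurable.aestronglyMeasurable
    exact measurable_const.div
      (((measurable_const.sub (measurable_const.mul (measurable_id.pow_const 2))).mul
        (Real.continuous_sqrt.measurable.comp (measurable_const.sub (measurable_id.pow_const 2)))).mul
        (Real.continuous_sqrt.measurable.comp (measurable_const.sub
          (measurable_const.mul (measurable_id.pow_const 2)))))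
  · have hmem : {k : ℝ | |k| < c} ∈ 𝓝 k₀ :=
      (isOpen_lt continuous_abs continuous_const).mem_nhds hck
    filter_upwards [hmem] with k hkc
    filter_upwards with t ht
    rw [uIoc_of_le (by norm_num : (0:ℝ) ≤ 1)] at ht
    have hk2 : k^2 ≤ c^2 := by nlinarith [sq_abs k, abs_nonneg k, le_of_lt hkc]
    have ht2 : t^2 ≤ 1 := by nlinarith [ht.1, ht.2]
    have hkt : k^2 * t^2 ≤ c^2 := by
      nlinarith [mul_nonneg (sub_nonneg.mpr hk2) (sq_nonneg t), mul_nonneg (sq_nonneg k) (sub_nonneg.mpr ht2)]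
    rcases eq_or_lt_of_le ht.2 with h1 | h1
    · subst h1
      norm_num [Real.zero_rpow]
    · have h1t : (0:ℝ) < 1 - t := by linarith
      have hpos1 : (0:ℝ) < 1 - 2*k^2*t^2 := by nlinarith
      have hposa : (0:ℝ) < 1 - t^2 := by nlinarith [ht.1]
      have hposb : (0:ℝ) < 1 - k^2*t^2 := by linarith
      have hd : (0:ℝ) < (1 - 2*k^2*t^2) * Real.sqrt (1-t^2) * Real.sqrt (1-k^2*t^2) :=
        mul_pos (mul_pos hpos1 (Real.sqrt_pos.mpr hposa)) (Real.sqrt_pos.mpr hposb)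
      rw [rpow_half ht.2, Real.norm_eq_abs, abs_of_nonneg (le_of_lt (one_div_pos.mpr hd)),
        div_mul_div_comm, one_mul]
      rw [mul_right_comm ((1:ℝ) - 2*c^2) (Real.sqrt (1-c^2)) (Real.sqrt (1-t))]
      apply one_div_le_one_div_of_le
      · exact mul_pos (mul_pos h2cc (Real.sqrt_pos.mpr h1t)) (Real.sqrt_pos.mpr hcc)
      · exact mul_le_mul
          (mul_le_mul (by linarith) (sqrt_mono_aux ht) (Real.sqrt_nonneg _) (by linarith))
          (Real.sqrt_le_sqrt (by linarith)) (Real.sqrt_nonneg _)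
          (mul_nonneg hpos1.le (Real.sqrt_nonneg _))
  · exact intInt_bound.const_mul _
  · have h1 : ∀ᵐ t : ℝ, t ≠ 1 := by
      rw [ae_iff]
      simp only [ne_eq, not_not, setOf_eq_eq_singleton]
      exact measure_singleton 1
    filter_upwards [h1] with t ht1 ht
    rw [uIoc_of_le (by norm_num : (0:ℝ) ≤ 1)] at ht
    have htlt : t < 1 := lt_of_le_of_ne ht.2 ht1
    have hk₀2 : k₀^2 < 1/2 := by nlinarith [sq_abs k₀]
    have ht2 : t^2 ≤ 1 := by nlinarith [ht.1]
    have hkt : k₀^2 * t^2 < 1/2 := by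
      nlinarith [mul_nonneg (sq_nonneg k₀) (sub_nonneg.mpr ht2)]
    have hd : (0:ℝ) < (1 - 2*k₀^2*t^2) * Real.sqrt (1-t^2) * Real.sqrt (1-k₀^2*t^2) :=
      mul_pos (mul_pos (by nlinarith) (Real.sqrt_pos.mpr (by nlinarith [ht.1])))
        (Real.sqrt_pos.mpr (by nlinarith))
    exact ContinuousAt.div continuousAt_const
      ((((continuous_const.sub ((continuous_const.mul (continuous_pow 2)).mul continuous_const)).mul
        continuous_const).mul
        ((continuous_const.sub ((continuous_pow 2).mul continuous_const)).sqrt)).continuousAt)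
      (ne_of_gt hd)

lemma I_int : IntervalIntegrable (fun t : ℝ => 1 / Real.sqrt (1 - t^2)) volume 0 1 := by
  apply intInt_bound.mono_fun
  · apply Measurable.aestronglyMeasurable
    exact measurable_const.div (Real.continuous_sqrt.measurable.comp
      (measurable_const.sub (measurable_id.pow_const 2)))
  · rw [Filter.EventuallyLE, ae_restrict_iff' measurableSet_uIoc]
    filter_upwards with t ht
    rw [uIoc_of_le (by norm_num : (0:ℝ) ≤ 1)] at ht
    rcases eq_or_lt_of_le ht.2 with h1 | h1
    · subst h1
      norm_num [Real.zero_rpow]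
    · have h1t : (0:ℝ) < 1 - t := by linarith
      rw [Real.norm_eq_abs, Real.norm_eq_abs, abs_of_nonneg (by positivity),
        abs_of_nonneg (by positivity), rpow_half ht.2]
      exact one_div_le_one_div_of_le (Real.sqrt_pos.mpr h1t) (sqrt_mono_aux ht)

lemma I_eq : (∫ t in (0:ℝ)..1, 1 / Real.sqrt (1 - t^2)) = π / 2 := by
  have hInt : IntegrableOn (fun t : ℝ => 1 / Real.sqrt (1 - t^2)) (uIcc (0:ℝ) 1) volume := by
    rw [uIcc_of_le (by norm_num : (0:ℝ) ≤ 1)]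
    exact (intervalIntegrable_iff_integrableOn_Icc_of_le (by norm_num)).mp I_int
  have hcont := intervalIntegral.continuousOn_primitive_interval (a := 0) (b := 1) hInt
  have hmem : (1:ℝ) ∈ uIcc (0:ℝ) 1 := by
    rw [uIcc_of_le (by norm_num : (0:ℝ) ≤ 1)]; norm_num
  have h1 : Tendsto (fun b => ∫ t in (0:ℝ)..b, 1 / Real.sqrt (1 - t^2)) (𝓝[Ioo (0:ℝ) 1] 1)
      (𝓝 (∫ t in (0:ℝ)..1, 1 / Real.sqrt (1 - t^2))) := by
    apply (hcont 1 hmem).tendsto.mono_left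
    apply nhdsWithin_mono
    rw [uIcc_of_le (by norm_num : (0:ℝ) ≤ 1)]
    exact Ioo_subset_Icc_self
  have key : ∀ b ∈ Ioo (0:ℝ) 1, (∫ t in (0:ℝ)..b, 1 / Real.sqrt (1 - t^2)) = Real.arcsin b := by
    intro b hb
    have hderiv : ∀ x ∈ uIcc (0:ℝ) b, HasDerivAt Real.arcsin (1 / Real.sqrt (1 - x^2)) x := by
      intro x hx
      rw [uIcc_of_le hb.1.le] at hx
      exact Real.hasDerivAt_arcsin (by linarith [hx.1]) (by linarith [hx.2, hb.2])
    have hint : IntervalIntegrable (fun t : ℝ => 1 / Real.sqrt (1 - t^2)) volume 0 b := by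
      apply I_int.mono_set'
      rw [uIoc_of_le hb.1.le, uIoc_of_le (by norm_num : (0:ℝ) ≤ 1)]
      exact Ioc_subset_Ioc_right hb.2.le
    rw [intervalIntegral.integral_eq_sub_of_hasDerivAt hderiv hint, Real.arcsin_zero, sub_zero]
  have h2 : Tendsto (fun b => ∫ t in (0:ℝ)..b, 1 / Real.sqrt (1 - t^2)) (𝓝[Ioo (0:ℝ) 1] 1)
      (𝓝 (π / 2)) := by
    have harc : Tendsto Real.arcsin (𝓝[Ioo (0:ℝ) 1] 1) (𝓝 (π / 2)) := by
      rw [← Real.arcsin_one]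
      exact (Real.continuous_arcsin.tendsto 1).mono_left nhdsWithin_le_nhds
    apply harc.congr'
    filter_upwards [self_mem_nhdsWithin] with b hb
    exact (key b hb).symm
  haveI : (𝓝[Ioo (0:ℝ) 1] (1:ℝ)).NeBot := by
    apply mem_closure_iff_nhdsWithin_neBot.mp
    rw [closure_Ioo (by norm_num : (0:ℝ) ≠ 1)]
    exact right_mem_Icc.mpr (by norm_num)
  exact tendsto_nhds_unique h1 h2

lemma K0 : ellipticK 0 = π / 2 := by
  have h : ellipticK 0 = ∫ t in (0:ℝ)..1, 1 / Real.sqrt (1 - t^2) := by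
    unfold ellipticK
    congr 1
    funext t
    norm_num
  rw [h, I_eq]

lemma E0 : ellipticE 0 = π / 2 := by
  have h : ellipticE 0 = ∫ t in (0:ℝ)..1, 1 / Real.sqrt (1 - t^2) := by
    unfold ellipticE
    congr 1
    funext t
    norm_num
  rw [h, I_eq]

lemma Pi00 : ellipticPi 0 0 = π / 2 := by
  have h : ellipticPi 0 0 = ∫ t in (0:ℝ)..1, 1 / Real.sqrt (1 - t^2) := by
    unfold ellipticPi
    congr 1
    funext t
    norm_num
  rw [h, I_eq]

lemma contPhi {k₀ : ℝ} (hk : |k₀| < Real.sqrt 2 / 2) :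
    ContinuousAt (fun k : ℝ => (Real.sqrt 2 / (2 * (1 - 2 * k^2))) *
      (2 * ellipticE k - ellipticK k + ellipticPi (2 * k^2) k)) k₀ := by
  have hs2 : Real.sqrt 2 ^ 2 = 2 := Real.sq_sqrt (by norm_num)
  have habs := abs_nonneg k₀
  have hk1 : |k₀| < 1 := by nlinarith [Real.sqrt_nonneg 2]
  have hden : 2 * (1 - 2 * k₀^2) ≠ 0 := by
    have : k₀^2 < 1/2 := by nlinarith [sq_abs k₀]
    exact ne_of_gt (by nlinarith)
  apply ContinuousAt.mul
  · exact ContinuousAt.div continuousAt_const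
      ((continuous_const.mul (continuous_const.sub (continuous_const.mul (continuous_pow 2)))).continuousAt)
      hden
  · exact ((continuousAt_const.mul contE).sub (contK hk1)).add (contPi hk)

lemma sitnikovT_eq (h : ℝ) : sitnikovT h = (fun k : ℝ => (Real.sqrt 2 / (2 * (1 - 2 * k^2))) *
    (2 * ellipticE k - ellipticK k + ellipticPi (2 * k^2) k)) (Real.sqrt (2 + h) / 2) := rfl

lemma contg (h₀ : ℝ) : ContinuousAt (fun h : ℝ => Real.sqrt (2 + h) / 2) h₀ :=
  ((Real.continuous_sqrt.comp (continuous_const.add continuous_id)).div_const 2).continuousAt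

theorem stmt_9 :
    ContinuousOn sitnikovT (Ioo (-2 : ℝ) 0) ∧
    Tendsto sitnikovT (nhdsWithin (-2 : ℝ) (Ioi (-2 : ℝ)))
      (nhds (π / Real.sqrt 2)) := by
  have hs2 : Real.sqrt 2 ^ 2 = 2 := Real.sq_sqrt (by norm_num)
  have hs2p : (0:ℝ) < Real.sqrt 2 := Real.sqrt_pos.mpr (by norm_num)
  constructor
  · intro h₀ hh₀
    apply ContinuousAt.continuousWithinAt
    have hk : |Real.sqrt (2 + h₀) / 2| < Real.sqrt 2 / 2 := by
      rw [abs_of_nonneg (by positivity)]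
      have : Real.sqrt (2 + h₀) < Real.sqrt 2 :=
        (Real.sqrt_lt_sqrt (by linarith [hh₀.1]) (by linarith [hh₀.2]))
      linarith
    have hc := ContinuousAt.comp (f := fun h : ℝ => Real.sqrt (2 + h) / 2) (x := h₀) (contPhi hk) (contg h₀)
    exact hc
  · have hg : Tendsto (fun h : ℝ => Real.sqrt (2 + h) / 2) (𝓝[>] (-2:ℝ)) (𝓝 0) := by
      have h1 := (contg (-2)).tendsto.mono_left (nhdsWithin_le_nhds (s := Ioi (-2:ℝ)))
      norm_num at h1
      exact h1
    have hPhi := (contPhi (k₀ := 0) (by rw [abs_zero]; positivity)).tendsto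
    have hcomp := hPhi.comp hg
    have hval : (Real.sqrt 2 / (2 * (1 - 2 * (0:ℝ)^2))) *
        (2 * ellipticE 0 - ellipticK 0 + ellipticPi (2 * (0:ℝ)^2) 0) = π / Real.sqrt 2 := by
      have hpi : ellipticPi (2 * (0:ℝ)^2) 0 = π / 2 := by norm_num [Pi00]
      rw [hpi, K0, E0]
      rw [eq_div_iff (ne_of_gt hs2p)]
      have hm : Real.sqrt 2 * Real.sqrt 2 = 2 := Real.mul_self_sqrt (by norm_num)
      field_simp
      linear_combination 2 * hs2
    rw [hval] at hcomp
    have : sitnikovT = (fun k : ℝ => (Real.sqrt 2 / (2 * (1 - 2 * k^2))) *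
        (2 * ellipticE k - ellipticK k + ellipticPi (2 * k^2) k)) ∘ (fun h => Real.sqrt (2 + h) / 2) := rfl
    rw [this]
    exact hcomp
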